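/- arXiv:2110.05670 — 5 statements merged into one kernel-verified Lean document; each statement's English description precedes it below -/
import Mathlib

section
/- If a graph $G$ contains no theta-graph (a subgraph consisting of three internally vertex-disjoint paths sharing the same two endpoints), then every block of $G$ is an isolated vertex, a single edge ($K_2$), or a cycle. -/
open SimpleGraph

attribute [local instance] Classical.propDecidable

/-- `G` contains a theta-subgraph: two vertices joined by three pairwise
internally vertex-disjoint paths. -/
def HasTheta {V : Type*} (G : SimpleGraph V) : Prop :=
  ∃ (a b : V) (p q r : G.Walk a b), a ≠ b ∧
    p.IsPath ∧ q.IsPath ∧ r.IsPath ∧ p ≠ q ∧ q ≠ r ∧ p ≠ r ∧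
    List.Disjoint p.support.tail.dropLast q.support.tail.dropLast ∧
    List.Disjoint q.support.tail.dropLast r.support.tail.dropLast ∧
    List.Disjoint p.support.tail.dropLast r.support.tail.dropLast

/-- `B` induces a connected subgraph of `G` with no cut-vertex. -/
def NoCutConn {V : Type*} (G : SimpleGraph V) (B : Set V) : Prop :=
  (G.induce B).Connected ∧ ∀ v ∈ B, (G.induce (B \ {v})).Preconnected

/-- `B` is a block of `G`: a maximal set inducing a connected subgraph
without cut-vertices. -/
def IsBlock {V : Type*} (G : SimpleGraph V) (B : Set V) : Prop :=
  NoCutConn G B ∧ ∀ B' : Set V, B ⊆ B' → NoCutConn G B' → B = B'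

section Aux

variable {V : Type*} {G : SimpleGraph V}

private lemma firstHit [DecidableEq V] {a b : V} (p : G.Walk a b) (S : Set V) (hb : b ∈ S) :
    ∃ w, w ∈ S ∧ ∃ q : G.Walk a w,
      (∀ x ∈ q.support, x ∈ p.support) ∧
      (∀ x ∈ q.support.dropLast, x ∉ S) ∧ (p.IsPath → q.IsPath) := by
  induction p with
  | nil => exact ⟨_, hb, Walk.nil, by simp, by simp, fun h => h⟩
  | @cons u c b h p ih =>
    by_cases ha : u ∈ S
    · exact ⟨u, ha, Walk.nil, by simp, by simp, fun _ => Walk.IsPath.nil⟩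
    · obtain ⟨w, hw, q, hsub, hdl, hpath⟩ := ih hb
      refine ⟨w, hw, Walk.cons h q, ?_, ?_, ?_⟩
      · intro x hx
        rw [Walk.support_cons] at hx ⊢
        rcases List.mem_cons.mp hx with hx | hx
        · simp [hx]
        · exact List.mem_cons_of_mem _ (hsub x hx)
      · intro x hx
        rw [Walk.support_cons, List.dropLast_cons_of_ne_nil (Walk.support_ne_nil q)] at hx
        rcases List.mem_cons.mp hx with hx | hx
        · exact hx ▸ ha
        · exact hdl x hx
      · intro hp
        rw [Walk.cons_isPath_iff] at hp ⊢
        exact ⟨hpath hp.1, fun hc => hp.2 (hsub u hc)⟩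

private lemma mapw {s : Set V} {x y : ↥s} (p : (G.induce s).Walk x y) :
    ∃ q : G.Walk x.val y.val, (∀ a ∈ q.support, a ∈ s) ∧ (p.IsPath → q.IsPath) := by
  refine ⟨p.map (Embedding.induce s).toHom, ?_, ?_⟩
  · intro a ha
    replace ha : a ∈ (p.map (Embedding.induce s).toHom).support := ha
    rw [Walk.support_map] at ha
    obtain ⟨b, _, rfl⟩ := List.mem_map.mp ha
    exact b.2
  · intro hp
    exact Walk.map_isPath_of_injective (Embedding.induce s (G := G)).injective hp

private lemma theta_of_three (hθ : ¬ HasTheta G) {B : Set V}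
    (hcut : ∀ v ∈ B, (G.induce (B \ {v})).Preconnected)
    {v x y z : V} (hv : v ∈ B) (hx : x ∈ B) (hy : y ∈ B) (hz : z ∈ B)
    (hxv : x ≠ v) (hyv : y ≠ v) (hzv : z ≠ v)
    (hxy : x ≠ y) (hyz : y ≠ z) (hxz : x ≠ z)
    (ax : G.Adj v x) (ay : G.Adj v y) (az : G.Adj v z) : False := by
  classical
  have hpre := hcut v hv
  have hxB : x ∈ B \ {v} := ⟨hx, hxv⟩
  have hyB : y ∈ B \ {v} := ⟨hy, hyv⟩
  have hzB : z ∈ B \ {v} := ⟨hz, hzv⟩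
  obtain ⟨P0⟩ := hpre ⟨x, hxB⟩ ⟨y, hyB⟩
  obtain ⟨P1', hP1sub, _⟩ := mapw P0
  have hP : P1'.bypass.IsPath := P1'.bypass_isPath
  set P := P1'.bypass with hPdef
  have hPsub : ∀ a ∈ P.support, a ∈ B \ {v} :=
    fun a ha => hP1sub a (P1'.support_bypass_subset ha)
  obtain ⟨Q0⟩ := hpre ⟨z, hzB⟩ ⟨x, hxB⟩
  obtain ⟨Q1, hQ1sub, _⟩ := mapw Q0
  have hxP : x ∈ P.support := P.start_mem_support
  obtain ⟨w, hwP, q, hqsub, hqdl, hqpath⟩ :=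
    firstHit Q1.bypass {a | a ∈ P.support} hxP
  have hq : q.IsPath := hqpath Q1.bypass_isPath
  have hwPs : w ∈ P.support := hwP
  have hqBsub : ∀ a ∈ q.support, a ∈ B \ {v} :=
    fun a ha => hQ1sub a (Q1.support_bypass_subset (hqsub a ha))
  set P1 := P.takeUntil w hwPs with hP1def
  set P2 := P.dropUntil w hwPs with hP2def
  have hP1p : P1.IsPath := hP.takeUntil hwPs
  have hP2p : P2.IsPath := hP.dropUntil hwPs
  have hsupp : P.support = P1.support ++ P2.support.tail := by
    conv_lhs => rw [← Walk.take_spec P hwPs]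
    rw [Walk.support_append]
  have hdisj : P1.support.Disjoint P2.support.tail := by
    have hnd : (P1.support ++ P2.support.tail).Nodup := hsupp ▸ hP.support_nodup
    exact (List.nodup_append'.mp hnd).2.2
  have hP1sub' : ∀ a ∈ P1.support, a ∈ P.support :=
    fun a ha => Walk.support_takeUntil_subset P hwPs ha
  have hP2sub' : ∀ a ∈ P2.support, a ∈ P.support :=
    fun a ha => Walk.support_dropUntil_subset P hwPs ha
  have hvw : v ≠ w := fun h => (hPsub w hwPs).2 (by simp [← h])
  refine hθ ⟨v, w, Walk.cons ax P1, Walk.cons ay P2.reverse, Walk.cons az q,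
    hvw, ?_, ?_, ?_, ?_, ?_, ?_, ?_, ?_, ?_⟩
  · rw [Walk.cons_isPath_iff]
    exact ⟨hP1p, fun hc => (hPsub v (hP1sub' v hc)).2 rfl⟩
  · rw [Walk.cons_isPath_iff]
    refine ⟨hP2p.reverse, fun hc => ?_⟩
    rw [Walk.support_reverse, List.mem_reverse] at hc
    exact (hPsub v (hP2sub' v hc)).2 rfl
  · rw [Walk.cons_isPath_iff]
    exact ⟨hq, fun hc => (hqBsub v hc).2 rfl⟩
  · intro hAB
    have h1 := congrArg Walk.support hAB
    rw [Walk.support_cons, Walk.support_cons, P1.support_eq_cons,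
      P2.reverse.support_eq_cons] at h1
    simp only [List.cons.injEq] at h1
    exact hxy h1.2.1
  · intro hBC
    have h1 := congrArg Walk.support hBC
    rw [Walk.support_cons, Walk.support_cons, q.support_eq_cons,
      P2.reverse.support_eq_cons] at h1
    simp only [List.cons.injEq] at h1
    exact hyz h1.2.1
  · intro hAC
    have h1 := congrArg Walk.support hAC
    rw [Walk.support_cons, Walk.support_cons, P1.support_eq_cons,
      q.support_eq_cons] at h1
    simp only [List.cons.injEq] at h1
    exact hxz h1.2.1
  · simp only [Walk.support_cons, List.tail_cons]
    intro a ha hb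
    rw [Walk.support_reverse, List.dropLast_reverse, List.mem_reverse] at hb
    exact hdisj ((List.dropLast_sublist _).subset ha) hb
  · simp only [Walk.support_cons, List.tail_cons]
    intro a ha hb
    have haP : a ∈ P.support := by
      rw [Walk.support_reverse, List.dropLast_reverse, List.mem_reverse] at ha
      exact hP2sub' a (List.mem_of_mem_tail ha)
    exact hqdl a hb haP
  · simp only [Walk.support_cons, List.tail_cons]
    intro a ha hb
    exact hqdl a hb (hP1sub' a ((List.dropLast_sublist _).subset ha))

private lemma exists_other_nbr {B : Set V}
    (hcut : ∀ v ∈ B, (G.induce (B \ {v})).Preconnected)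
    (h3 : 3 ≤ B.ncard) {v : V} (hv : v ∈ B) {u0 : V} (hu0 : u0 ∈ B) (hu0v : u0 ≠ v) :
    ∃ s ∈ B, G.Adj v s ∧ s ≠ u0 := by
  obtain ⟨t, ht, htv, htu⟩ : ∃ t, t ∈ B ∧ t ≠ v ∧ t ≠ u0 := by
    by_contra hc
    push_neg at hc
    have hsub : B ⊆ {v, u0} := by
      intro a ha
      by_cases hav : a = v
      · exact Or.inl hav
      · exact Or.inr (hc a ha hav)
    have h1 := Set.ncard_le_ncard hsub (Set.toFinite _)
    have h2 : ({v, u0} : Set V).ncard ≤ 2 :=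
      (Set.ncard_insert_le _ _).trans (by simp)
    omega
  have hpre := hcut u0 hu0
  have hvB : v ∈ B \ {u0} := ⟨hv, fun h => hu0v (by simpa using h.symm)⟩
  have htB : t ∈ B \ {u0} := ⟨ht, htu⟩
  obtain ⟨W⟩ := hpre ⟨v, hvB⟩ ⟨t, htB⟩
  have hne : (⟨v, hvB⟩ : ↥(B \ {u0})) ≠ ⟨t, htB⟩ := by
    simp [Ne.symm htv]
  have hadj := W.adj_snd (Walk.not_nil_of_ne hne)
  set s' := W.getVert 1 with hs'
  have hGadj : G.Adj v s'.val := hadj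
  exact ⟨s'.val, s'.2.1, hGadj, fun h => s'.2.2 (by simp [h])⟩

private lemma exists_ne_mem {B : Set V} (h3 : 3 ≤ B.ncard) (v : V) :
    ∃ t, t ∈ B ∧ t ≠ v := by
  by_contra hc
  push_neg at hc
  have hsub : B ⊆ {v} := fun a ha => hc a ha
  have h1 := Set.ncard_le_ncard hsub (Set.toFinite _)
  simp [Set.ncard_singleton] at h1
  omega

end Aux

/-- If `G` contains no theta-graph, then each block of `G` is an isolated
vertex, a single edge, or a cycle. -/
theorem blocks_of_theta_free {V : Type*} [Fintype V] (G : SimpleGraph V)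
    (hθ : ¬ HasTheta G) (B : Set V) (hB : IsBlock G B) :
    (∃ v, B = {v}) ∨
    (∃ u v, u ≠ v ∧ G.Adj u v ∧ B = {u, v}) ∨
    ((G.induce B).Connected ∧ 3 ≤ B.ncard ∧ ∀ v : B, (G.induce B).degree v = 2) := by
  classical
  obtain ⟨⟨hconn, hcut⟩, -⟩ := hB
  have hfin : B.Finite := Set.toFinite B
  have hne : B.Nonempty := Set.nonempty_coe_sort.mp hconn.nonempty
  have hpos : 0 < B.ncard := (Set.ncard_pos hfin).mpr hne
  rcases lt_or_ge B.ncard 3 with hlt | h3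
  · have h12 : B.ncard = 1 ∨ B.ncard = 2 := by omega
    rcases h12 with h | h
    · exact Or.inl (Set.ncard_eq_one.mp h)
    · obtain ⟨a, b, hab, rfl⟩ := Set.ncard_eq_two.mp h
      refine Or.inr (Or.inl ⟨a, b, hab, ?_, rfl⟩)
      have ha : a ∈ ({a, b} : Set V) := by simp
      have hb : b ∈ ({a, b} : Set V) := by simp
      obtain ⟨W⟩ := hconn.preconnected ⟨a, ha⟩ ⟨b, hb⟩
      have hne' : (⟨a, ha⟩ : ↥({a, b} : Set V)) ≠ ⟨b, hb⟩ := by simp [hab]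
      have hadj := W.adj_snd (Walk.not_nil_of_ne hne')
      set s' := W.getVert 1 with hs'
      have hGadj : G.Adj a s'.val := hadj
      have : s'.val = b := by
        rcases s'.2 with h' | h'
        · exact absurd h' hGadj.ne'
        · exact h'
      exact this ▸ hGadj
  · refine Or.inr (Or.inr ⟨hconn, h3, ?_⟩)
    intro v
    have hdeg_le : (G.induce B).degree v ≤ 2 := by
      by_contra hc
      push_neg at hc
      rw [← SimpleGraph.card_neighborFinset_eq_degree] at hc
      obtain ⟨x, hxm, y, hym, z, hzm, hxy, hxz, hyz⟩ := Finset.two_lt_card.mp hc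
      rw [SimpleGraph.mem_neighborFinset] at hxm hym hzm
      have axv : G.Adj v.val x.val := hxm
      have ayv : G.Adj v.val y.val := hym
      have azv : G.Adj v.val z.val := hzm
      exact theta_of_three hθ hcut v.2 x.2 y.2 z.2
        axv.ne' ayv.ne' azv.ne'
        (fun h => hxy (Subtype.ext h)) (fun h => hyz (Subtype.ext h))
        (fun h => hxz (Subtype.ext h)) axv ayv azv
    have hdeg_ge : 2 ≤ (G.induce B).degree v := by
      obtain ⟨t, ht, htv⟩ := exists_ne_mem h3 v.val
      obtain ⟨s1, hs1B, hs1adj, -⟩ := exists_other_nbr hcut h3 v.2 ht htv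
      obtain ⟨s2, hs2B, hs2adj, hs2s1⟩ := exists_other_nbr hcut h3 v.2 hs1B hs1adj.ne'
      rw [← SimpleGraph.card_neighborFinset_eq_degree]
      refine Finset.one_lt_card.mpr ⟨⟨s1, hs1B⟩, ?_, ⟨s2, hs2B⟩, ?_, ?_⟩
      · rw [SimpleGraph.mem_neighborFinset]
        exact hs1adj
      · rw [SimpleGraph.mem_neighborFinset]
        exact hs2adj
      · intro h
        exact hs2s1 (congrArg Subtype.val h.symm)
    omega
end

section
/- Let $G$ be a graph on $n$ vertices with no Hamilton cycle. Then $e(G) \leq \binom{n-1}{2} + 1$. -/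
open SimpleGraph

attribute [local instance] Classical.propDecidable

namespace OreAux

variable {V : Type*}

/-- Build a walk from a chain of adjacent vertices. -/
def mkWalk (G : SimpleGraph V) :
    ∀ (a : V) (l : List V), List.Chain G.Adj a l →
      G.Walk a ((a :: l).getLast (List.cons_ne_nil a l))
  | _, [], _ => Walk.nil.copy rfl (by simp)
  | a, c :: l, h =>
    (Walk.cons (List.chain_cons.mp h).1 (mkWalk G c l (List.chain_cons.mp h).2)).copy rfl
      (by rw [List.getLast_cons (List.cons_ne_nil c l)])

@[simp] lemma mkWalk_support (G : SimpleGraph V) :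
    ∀ (a : V) (l : List V) (h : List.Chain G.Adj a l),
      (mkWalk G a l h).support = a :: l
  | _, [], _ => by simp [mkWalk]
  | a, c :: l, h => by
    simp [mkWalk, mkWalk_support G c l (List.chain_cons.mp h).2]

@[simp] lemma mkWalk_edges (G : SimpleGraph V) :
    ∀ (a : V) (l : List V) (h : List.Chain G.Adj a l),
      (mkWalk G a l h).edges = List.zipWith (fun x y => s(x, y)) (a :: l) l
  | _, [], _ => by simp [mkWalk]
  | a, c :: l, h => by
    simp [mkWalk, mkWalk_edges G c l (List.chain_cons.mp h).2]

lemma chain_iff_get' {R : V → V → Prop} {a : V} {l : List V} : List.Chain R a l ↔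
    (∀ h : 0 < l.length, R a (l.get ⟨0, h⟩)) ∧
      ∀ (i : ℕ) (h : i < l.length - 1),
        R (l.get ⟨i, by omega⟩) (l.get ⟨i+1, by omega⟩) := by
  show List.IsChain R (a :: l) ↔ _
  rw [List.isChain_iff_getElem]
  constructor
  · intro h
    exact ⟨fun h0 => by simpa using h 0 (by simp; omega),
      fun i hi => by
        have := h (i+1) (by simp; omega)
        simp only [List.getElem_cons_succ, List.get_eq_getElem] at this ⊢
        exact this⟩
  · rintro ⟨h0, h1⟩ i hi
    cases i with
    | zero => simpa using h0 (by simp at hi; omega)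
    | succ i => simpa using h1 i (by simp at hi; omega)

lemma hamcyc_to_cycle [Fintype V] [DecidableEq V] (G : SimpleGraph V) {n : ℕ}
    (hcard : Fintype.card V = n) (hn : 3 ≤ n) [NeZero n] (g : Fin n ≃ V)
    (hg : ∀ i : Fin n, G.Adj (g i) (g (i + 1))) :
    ∃ (v : V) (c : G.Walk v v), c.IsHamiltonianCycle := by
  have hnpos : 0 < n := by omega
  set fidx : ℕ → Fin n := fun k => ⟨k % n, Nat.mod_lt _ hnpos⟩ with hfidx
  -- basic mod facts
  have hmodif : ∀ i : ℕ, i ≤ n → i % n = if i = n then 0 else i := by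
    intro i hi
    split
    · simp [*, Nat.mod_self]
    · exact Nat.mod_eq_of_lt (by omega)
  have hmod : ∀ i j : ℕ, i ≤ n → j ≤ n → fidx i = fidx j →
      i = j ∨ (i = 0 ∧ j = n) ∨ (i = n ∧ j = 0) := by
    intro i j hi hj hij
    have h1 : i % n = j % n := congrArg Fin.val hij
    rw [hmodif i hi, hmodif j hj] at h1
    split_ifs at h1 <;> omega
  -- bridging adjacency
  have hb : ∀ k : ℕ, G.Adj (g (fidx k)) (g (fidx (k + 1))) := by
    intro k
    have := hg (fidx k)
    convert this using 2
    apply Fin.ext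
    rw [Fin.add_def]
    have h1 : (1 : Fin n).val = 1 := by
      rw [Fin.val_one']
      exact Nat.mod_eq_of_lt (by omega)
    simp only [hfidx, h1]
    conv_rhs => rw [Nat.mod_add_mod]
  set L : List V := List.ofFn (fun i : Fin n => g (fidx (i.val + 1))) with hLdef
  have hlen : L.length = n := by simp [hLdef]
  have hL : ∀ (i : ℕ) (hi : i < n), L[i]'(by omega) = g (fidx (i + 1)) := by
    intro i hi
    simp [hLdef]
  have hLnodup : L.Nodup := by
    rw [hLdef]
    apply List.nodup_ofFn_ofInjective
    intro i j hij
    have := hmod (i.val + 1) (j.val + 1) (by omega) (by omega) (g.injective hij)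
    apply Fin.ext
    omega
  have hchain : List.Chain G.Adj (g (fidx 0)) L := by
    rw [chain_iff_get']
    constructor
    · intro h
      rw [List.get_eq_getElem, hL 0 (by omega)]
      exact hb 0
    · intro i hi
      rw [List.get_eq_getElem, List.get_eq_getElem, hL i (by omega), hL (i + 1) (by omega)]
      exact hb (i + 1)
  have hLne : L ≠ [] := by
    intro hc
    rw [hc] at hlen
    simp at hlen
    omega
  have hL' : ∀ (i : ℕ) (hi : i < L.length), L[i] = g (fidx (i + 1)) := by
    intro i hi
    exact hL i (by omega)
  have hlast : (g (fidx 0) :: L).getLast (List.cons_ne_nil _ _) = g (fidx 0) := by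
    rw [List.getLast_cons hLne, List.getLast_eq_getElem, hL' (L.length - 1) (by omega)]
    congr 1
    apply Fin.ext
    simp only [hfidx]
    rw [hlen, show n - 1 + 1 = n by omega, Nat.mod_self, Nat.zero_mod]
  set p : G.Walk (g (fidx 0)) (g (fidx 0)) :=
    (mkWalk G (g (fidx 0)) L hchain).copy rfl hlast with hpdef
  have hsup : p.support = g (fidx 0) :: L := by simp [hpdef]
  have e1 : ∀ (k : ℕ) (hk : k < n), (g (fidx 0) :: L)[k]'(by simp [hlen]; omega)
      = g (fidx k) := by
    intro k hk
    rcases k with _ | k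
    · simp
    · simp only [List.getElem_cons_succ]
      exact hL k (by omega)
  refine ⟨g (fidx 0), p, ?_⟩
  rw [Walk.isHamiltonianCycle_iff_isCycle_and_support_count_tail_eq_one]
  constructor
  · rw [Walk.isCycle_def]
    refine ⟨?_, ?_, ?_⟩
    · -- IsTrail : edges nodup
      rw [Walk.isTrail_def]
      have hedges : p.edges = List.zipWith (fun x y => s(x, y)) (g (fidx 0) :: L) L := by
        simp [hpdef]
      rw [hedges]
      have hzlen : (List.zipWith (fun x y => s(x, y)) (g (fidx 0) :: L) L).length = n := by
        simp [hlen]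
      rw [List.nodup_iff_injective_get]
      intro i j hij
      have hi : i.val < n := by have := i.isLt; omega
      have hj : j.val < n := by have := j.isLt; omega
      rw [List.get_eq_getElem, List.get_eq_getElem, List.getElem_zipWith,
        List.getElem_zipWith] at hij
      rw [e1 i.val hi, e1 j.val hj, hL i.val hi, hL j.val hj, Sym2.eq_iff] at hij
      apply Fin.ext
      rcases hij with ⟨h1, h2⟩ | ⟨h1, h2⟩
      · have := hmod _ _ (by omega) (by omega) (g.injective h1)
        omega
      · have c1 := hmod _ _ (by omega) (by omega) (g.injective h1)
        have c2 := hmod _ _ (by omega) (by omega) (g.injective h2)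
        omega
    · -- p ≠ nil
      intro hcontra
      have := congrArg Walk.support hcontra
      rw [hsup] at this
      simp only [Walk.support_nil] at this
      have := congrArg List.length this
      simp [hlen] at this
      omega
    · rw [hsup]
      simpa using hLnodup
  · -- counts
    intro a
    rw [hsup]
    simp only [List.tail_cons]
    apply List.count_eq_one_of_mem hLnodup
    rw [hLdef, List.mem_ofFn]
    set k : Fin n := g.symm a with hk
    refine ⟨⟨if k.val = 0 then n - 1 else k.val - 1, by have := k.isLt; split <;> omega⟩, ?_⟩
    have : fidx ((if k.val = 0 then n - 1 else k.val - 1) + 1) = k := by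
      apply Fin.ext
      simp only [hfidx]
      split
      · rw [show n - 1 + 1 = n by omega, Nat.mod_self]
        omega
      · rw [show k.val - 1 + 1 = k.val by omega, Nat.mod_eq_of_lt k.isLt]
    dsimp only
    rw [this]
    simp [hk]

lemma cycle_to_hamcyc [Fintype V] [DecidableEq V] (G : SimpleGraph V) {n : ℕ}
    (hcard : Fintype.card V = n) [NeZero n] {a : V} (c : G.Walk a a)
    (hc : c.IsHamiltonianCycle) :
    ∃ g : Fin n ≃ V, ∀ i : Fin n, G.Adj (g i) (g (i + 1)) := by
  have hn3 : 3 ≤ n := by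
    have h1 := hc.isCycle.three_le_length
    have h2 := hc.length_eq
    omega
  set tl := c.support.tail with htl
  have hlen : tl.length = n := by
    have h1 := c.length_support
    have h2 := hc.length_eq
    simp only [htl, List.length_tail, h1, h2, hcard]
    omega
  have hcount : ∀ x, tl.count x = 1 := by
    intro x
    have := hc.isHamiltonian_tail x
    rwa [Walk.support_tail_of_not_nil c hc.isCycle.not_nil] at this
  have hnodup : tl.Nodup := List.nodup_iff_count_le_one.2 fun x => le_of_eq (hcount x)
  have hmem : ∀ x, x ∈ tl := fun x => by
    rw [← List.count_pos_iff]
    rw [hcount x]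
    omega
  have hbij : Function.Bijective (fun i : Fin n => tl[i.val]'(by omega)) := by
    constructor
    · intro i j hij
      have h2 : tl.get ⟨i.val, by omega⟩ = tl.get ⟨j.val, by omega⟩ := by simpa using hij
      have := List.nodup_iff_injective_get.1 hnodup h2
      apply Fin.ext
      simpa using congrArg Fin.val this
    · intro x
      obtain ⟨i, hi, hix⟩ := List.mem_iff_getElem.1 (hmem x)
      exact ⟨⟨i, by omega⟩, hix⟩
  set g : Fin n ≃ V := Equiv.ofBijective _ hbij with hg
  have hgval : ∀ i : Fin n, g i = tl[i.val]'(by omega) := fun i => rfl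
  refine ⟨g, fun i => ?_⟩
  have hchain : List.Chain G.Adj a tl := by
    have := c.isChain_adj_support
    rw [c.support_eq_cons] at this
    exact this
  rw [chain_iff_get'] at hchain
  obtain ⟨h0, h1⟩ := hchain
  rw [hgval, hgval]
  have hv0 : (i + 1).val = (i.val + 1) % n := by
    rw [Fin.add_def, Fin.val_one', Nat.mod_eq_of_lt (show 1 < n by omega)]
  rcases Nat.lt_or_ge (i.val + 1) n with hi | hi
  · have hv : (i + 1).val = i.val + 1 := by
      rw [hv0]
      exact Nat.mod_eq_of_lt hi
    simp only [hv]
    simpa using h1 i.val (by omega)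
  · -- wrap around
    have hiv : i.val = n - 1 := by have := i.isLt; omega
    have hv : (i + 1).val = 0 := by
      rw [hv0, hiv, show n - 1 + 1 = n by omega, Nat.mod_self]
    simp only [hv]
    have hslen : c.support.length = n + 1 := by
      rw [c.length_support, hc.length_eq, hcard]
    have h5 : c.support[c.support.length - 1]'(by simp) = a := by
      rw [← List.getLast_eq_getElem]
      exact c.getLast_support
    have h6 : tl[i.val]'(by omega) = c.support[i.val + 1]'(by omega) := by
      exact List.getElem_tail _
    have hl2 : tl[i.val]'(by omega) = a := by
      rw [h6]
      have hidx : i.val + 1 = c.support.length - 1 := by omega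
      simp only [hidx]
      exact h5
    rw [hl2]
    simpa using h0 (by omega)

/-- The rerouting permutation used in the crossing argument. -/
def reroute (n J : ℕ) (hn : 3 ≤ n) (h1 : 2 ≤ J) (h2 : J ≤ n - 2) (m : Fin n) : Fin n :=
  if m.val = 0 then ⟨0, by omega⟩
  else if _h : m.val ≤ n - J then ⟨J + m.val - 1, by have := m.isLt; omega⟩
  else ⟨n - m.val, by have := m.isLt; omega⟩

lemma reroute_val (n J : ℕ) (hn : 3 ≤ n) (h1 : 2 ≤ J) (h2 : J ≤ n - 2) (m : Fin n) :
    (reroute n J hn h1 h2 m).val =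
      if m.val = 0 then 0
      else if m.val ≤ n - J then J + m.val - 1
      else n - m.val := by
  unfold reroute
  split_ifs <;> rfl

lemma rotation [Fintype V] [DecidableEq V] (G : SimpleGraph V) [DecidableRel G.Adj]
    {n : ℕ} (hn : 3 ≤ n) [NeZero n]
    {u v : V} (huv : u ≠ v) (hnadj : ¬G.Adj u v)
    (hdeg : n ≤ G.degree u + G.degree v)
    (f : Fin n ≃ V) (hf : ∀ i : Fin n, (G ⊔ edge u v).Adj (f i) (f (i + 1))) :
    ∃ g : Fin n ≃ V, ∀ i : Fin n, G.Adj (g i) (g (i + 1)) := by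
  by_cases hall : ∀ i : Fin n, G.Adj (f i) (f (i + 1))
  · exact ⟨f, hall⟩
  push_neg at hall
  obtain ⟨i, hbad⟩ := hall
  have hone : (1 : Fin n).val = 1 := by
    rw [Fin.val_one']
    exact Nat.mod_eq_of_lt (by omega)
  set last : Fin n := ⟨n - 1, by omega⟩ with hlastdef
  have hlast1 : last + 1 = 0 := by
    apply Fin.ext
    rw [Fin.add_def, hone]
    simp only [hlastdef]
    rw [show n - 1 + 1 = n by omega, Nat.mod_self]
    rfl
  -- orientation of the u-v edge on the cycle
  have hG' := hf i
  rw [sup_adj, edge_adj] at hG'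
  have hedge : (f i = u ∧ f (i + 1) = v) ∨ (f i = v ∧ f (i + 1) = u) := by
    rcases hG' with h | ⟨h, _⟩
    · exact absurd h hbad
    · exact h
  -- normalize: g₀ 0 = u, g₀ last = v
  obtain ⟨g₀, hg0, hglast, hadj'⟩ :
      ∃ g₀ : Fin n ≃ V, g₀ 0 = u ∧ g₀ last = v ∧
        ∀ j : Fin n, (G ⊔ edge u v).Adj (g₀ j) (g₀ (j + 1)) := by
    have hl : last = -1 := by
      have h := hlast1
      rwa [add_eq_zero_iff_eq_neg] at h
    rcases hedge with ⟨h1, h2⟩ | ⟨h1, h2⟩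
    · -- f i = u, f (i+1) = v : reflect
      refine ⟨(Equiv.subLeft i).trans f, ?_, ?_, ?_⟩
      · show f (i - 0) = u
        rw [sub_zero]
        exact h1
      · show f (i - last) = v
        rw [hl, sub_neg_eq_add]
        exact h2
      · intro j
        show (G ⊔ edge u v).Adj (f (i - j)) (f (i - (j + 1)))
        have hkey : i - (j + 1) + 1 = i - j := by abel
        have := hf (i - (j + 1))
        rw [hkey] at this
        exact this.symm
    · -- f i = v, f (i+1) = u : translate
      refine ⟨(Equiv.addLeft (i + 1)).trans f, ?_, ?_, ?_⟩
      · show f (i + 1 + 0) = u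
        rw [add_zero]
        exact h2
      · show f (i + 1 + last) = v
        rw [add_assoc, show (1 : Fin n) + last = 0 by rw [add_comm]; exact hlast1, add_zero]
        exact h1
      · intro j
        show (G ⊔ edge u v).Adj (f (i + 1 + j)) (f (i + 1 + (j + 1)))
        have hkey : i + 1 + j + 1 = i + 1 + (j + 1) := by abel
        have := hf (i + 1 + j)
        rw [hkey] at this
        exact this
  -- every non-wrap step of g₀ is a G-edge
  have hGadj : ∀ j : Fin n, j ≠ last → G.Adj (g₀ j) (g₀ (j + 1)) := by
    intro j hj
    have h := hadj' j
    rw [sup_adj, edge_adj] at h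
    rcases h with h | ⟨h, _⟩
    · exact h
    rcases h with ⟨ha, hb⟩ | ⟨ha, hb⟩
    · exfalso
      have hj0 : j = 0 := g₀.injective (by rw [ha, hg0])
      have hj1 : j + 1 = last := g₀.injective (by rw [hb, hglast])
      rw [hj0, zero_add] at hj1
      have h2 := congrArg Fin.val hj1
      rw [hone] at h2
      simp only [hlastdef] at h2
      omega
    · exact absurd (g₀.injective (ha.trans hglast.symm)) hj
  have hstep : ∀ x y : Fin n, x.val ≤ n - 2 → y.val = x.val + 1 → G.Adj (g₀ x) (g₀ y) := by
    intro x y hx hy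
    have hxy : y = x + 1 := by
      apply Fin.ext
      rw [Fin.add_def, hone, hy]
      exact (Nat.mod_eq_of_lt (by omega)).symm
    rw [hxy]
    exact hGadj x (by
      intro hc
      have h2 := congrArg Fin.val hc
      simp only [hlastdef] at h2
      omega)
  -- the two neighbour index sets
  set S : Finset (Fin n) := Finset.univ.filter (fun k => k ≠ 0 ∧ G.Adj u (g₀ k)) with hSdef
  set T : Finset (Fin n) := Finset.univ.filter (fun k => k ≠ 0 ∧ G.Adj v (g₀ (k - 1))) with hTdef
  have hcardS : S.card = G.degree u := by
    rw [← card_neighborFinset_eq_degree]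
    apply Finset.card_bij (fun k _ => g₀ k)
    · intro k hk
      rw [hSdef, Finset.mem_filter] at hk
      rw [mem_neighborFinset]
      exact hk.2.2
    · intro k hk k' hk' hkk
      exact g₀.injective hkk
    · intro w hw
      rw [mem_neighborFinset] at hw
      refine ⟨g₀.symm w, ?_, by simp⟩
      rw [hSdef, Finset.mem_filter]
      refine ⟨Finset.mem_univ _, ?_, by simpa using hw⟩
      intro hc
      have hwu : w = u := by
        rw [← hg0, ← hc]
        simp
      exact hw.ne' hwu
  have hcardT : T.card = G.degree v := by
    rw [← card_neighborFinset_eq_degree]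
    apply Finset.card_bij (fun k _ => g₀ (k - 1))
    · intro k hk
      rw [hTdef, Finset.mem_filter] at hk
      rw [mem_neighborFinset]
      exact hk.2.2
    · intro k hk k' hk' hkk
      have h2 := g₀.injective hkk
      have := sub_left_injective (G := Fin n) (b := 1) h2
      exact this
    · intro w hw
      rw [mem_neighborFinset] at hw
      refine ⟨g₀.symm w + 1, ?_, by simp⟩
      rw [hTdef, Finset.mem_filter]
      refine ⟨Finset.mem_univ _, ?_, by simpa using hw⟩
      intro hc
      have hsw : g₀.symm w = last := by
        have h3 : g₀.symm w + 1 = last + 1 := by rw [hc, hlast1]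
        exact add_right_cancel h3
      have hwv : w = v := by
        rw [← hglast, ← hsw]
        simp
      exact hw.ne' hwv
  have hsub : S ∪ T ⊆ Finset.univ.erase 0 := by
    intro k hk
    rw [Finset.mem_union, hSdef, hTdef, Finset.mem_filter, Finset.mem_filter] at hk
    rw [Finset.mem_erase]
    rcases hk with h | h <;> exact ⟨h.2.1, Finset.mem_univ _⟩
  have hunion : (S ∪ T).card ≤ n - 1 := by
    calc (S ∪ T).card ≤ (Finset.univ.erase (0 : Fin n)).card := Finset.card_le_card hsub
    _ = n - 1 := by
        rw [Finset.card_erase_of_mem (Finset.mem_univ _)]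
        simp
  have hinter : 0 < (S ∩ T).card := by
    have h1 := Finset.card_inter_add_card_union S T
    omega
  obtain ⟨j, hj⟩ := Finset.card_pos.mp hinter
  rw [Finset.mem_inter, hSdef, hTdef, Finset.mem_filter, Finset.mem_filter] at hj
  obtain ⟨⟨-, hj0, hju⟩, -, -, hjv⟩ := hj
  -- exclusions : 2 ≤ j < n - 1
  have hjlt := j.isLt
  have hj0' : j.val ≠ 0 := fun hc => hj0 (Fin.ext hc)
  have hjne : j.val ≠ n - 1 := by
    intro hc
    have hjl : j = last := Fin.ext (by simp only [hlastdef]; exact hc)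
    rw [hjl, hglast] at hju
    exact hnadj hju
  have hjm : j - 1 = (⟨j.val - 1, by omega⟩ : Fin n) := by
    apply Fin.ext
    rw [Fin.sub_def, hone]
    show (n - 1 + j.val) % n = j.val - 1
    rw [show n - 1 + j.val = n + (j.val - 1) by omega, Nat.add_mod_left]
    exact Nat.mod_eq_of_lt (by omega)
  have hjne1 : j.val ≠ 1 := by
    intro hc
    have h1 : j - 1 = 0 := by
      rw [hjm]
      apply Fin.ext
      show j.val - 1 = 0
      omega
    rw [h1, hg0] at hjv
    exact hnadj hjv.symm
  have hJ1 : 2 ≤ j.val := by omega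
  have hJ2 : j.val ≤ n - 2 := by omega
  -- the rerouting permutation
  set σ : Fin n → Fin n := reroute n j.val hn hJ1 hJ2 with hσdef
  have hσval : ∀ m : Fin n, (σ m).val =
      if m.val = 0 then 0
      else if m.val ≤ n - j.val then j.val + m.val - 1
      else n - m.val := reroute_val n j.val hn hJ1 hJ2
  have hσinj : Function.Injective σ := by
    intro m m' h
    have hv := congrArg Fin.val h
    rw [hσval, hσval] at hv
    have h1 := m.isLt
    have h2 := m'.isLt
    apply Fin.ext
    split_ifs at hv <;> omega
  have hσbij : Function.Bijective σ :=
    (Fintype.bijective_iff_injective_and_card σ).mpr ⟨hσinj, rfl⟩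
  refine ⟨(Equiv.ofBijective σ hσbij).trans g₀, ?_⟩
  intro m
  show G.Adj (g₀ (σ m)) (g₀ (σ (m + 1)))
  have hmlt := m.isLt
  have hmv : (m + 1).val = (m.val + 1) % n := by
    rw [Fin.add_def, hone]
  by_cases hc0 : m.val = 0
  · -- u → g₀ j
    have e1 : σ m = 0 := by
      apply Fin.ext
      rw [hσval]
      simp [hc0]
    have e2 : σ (m + 1) = j := by
      apply Fin.ext
      rw [hσval, hmv, hc0]
      rw [Nat.mod_eq_of_lt (by omega)]
      have : ¬(0 + 1 = 0) := by omega
      rw [if_neg this, if_pos (by omega)]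
      omega
    rw [e1, e2, hg0]
    exact hju
  by_cases hc2 : m.val = n - j.val
  · -- v → g₀ (j - 1)
    have e1 : σ m = last := by
      apply Fin.ext
      rw [hσval, if_neg (by omega), if_pos (by omega)]
      simp only [hlastdef]
      omega
    have e2 : σ (m + 1) = j - 1 := by
      rw [hjm]
      apply Fin.ext
      have hmv1 : (m + 1).val = n - j.val + 1 := by
        rw [hmv, hc2]
        exact Nat.mod_eq_of_lt (by omega)
      rw [hσval, hmv1, if_neg (by omega), if_neg (by omega)]
      show n - (n - j.val + 1) = j.val - 1
      omega
    rw [e1, e2, hglast]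
    exact hjv
  by_cases hc4 : m.val = n - 1
  · -- g₀ 1 → g₀ 0 (wrap)
    have e1 : (σ m).val = 1 := by
      rw [hσval, if_neg (by omega), if_neg (by omega)]
      omega
    have e2 : (σ (m + 1)).val = 0 := by
      have hmv1 : (m + 1).val = 0 := by
        rw [hmv, hc4, show n - 1 + 1 = n by omega, Nat.mod_self]
      rw [hσval, if_pos hmv1]
    exact (hstep _ _ (by rw [e2]; omega) (by rw [e1, e2]) ).symm
  by_cases hc1 : m.val ≤ n - j.val
  · -- forward segment
    have e1 : (σ m).val = j.val + m.val - 1 := by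
      rw [hσval, if_neg hc0, if_pos hc1]
    have e2 : (σ (m + 1)).val = j.val + m.val := by
      have hmv1 : (m + 1).val = m.val + 1 := by
        rw [hmv]
        exact Nat.mod_eq_of_lt (by omega)
      rw [hσval, hmv1, if_neg (by omega), if_pos (by omega)]
      omega
    exact hstep _ _ (by rw [e1]; omega) (by rw [e1, e2]; omega)
  · -- backward segment
    have e1 : (σ m).val = n - m.val := by
      rw [hσval, if_neg hc0, if_neg hc1]
    have e2 : (σ (m + 1)).val = n - m.val - 1 := by
      have hmv1 : (m + 1).val = m.val + 1 := by
        rw [hmv]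
        exact Nat.mod_eq_of_lt (by omega)
      rw [hσval, hmv1, if_neg (by omega), if_neg (by omega)]
      omega
    exact (hstep _ _ (by rw [e2]; omega) (by rw [e1, e2]; omega)).symm

lemma deg_sum_le [Fintype V] [DecidableEq V] (H : SimpleGraph V) [DecidableRel H.Adj]
    {u v : V} (h : H.Adj u v) :
    H.degree u + H.degree v ≤ H.edgeFinset.card + 1 := by
  have hA : (H.incidenceFinset u).card = H.degree u := by
    rw [card_incidenceFinset_eq_degree]
  have hB : (H.incidenceFinset v).card = H.degree v := by
    rw [card_incidenceFinset_eq_degree]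
  have hsub : H.incidenceFinset u ∪ H.incidenceFinset v ⊆ H.edgeFinset := by
    intro e he
    rw [Finset.mem_union, mem_incidenceFinset, mem_incidenceFinset] at he
    rw [mem_edgeFinset]
    rcases he with he | he <;> exact he.1
  have hint : H.incidenceFinset u ∩ H.incidenceFinset v ⊆ {s(u, v)} := by
    intro e he
    rw [Finset.mem_inter, mem_incidenceFinset, mem_incidenceFinset] at he
    rw [Finset.mem_singleton]
    exact (Sym2.mem_and_mem_iff h.ne).mp ⟨he.1.2, he.2.2⟩
  calc H.degree u + H.degree v
      = (H.incidenceFinset u ∪ H.incidenceFinset v).card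
        + (H.incidenceFinset u ∩ H.incidenceFinset v).card := by
        rw [Finset.card_union_add_card_inter, hA, hB]
    _ ≤ H.edgeFinset.card + 1 := by
        have h1 := Finset.card_le_card hsub
        have h2 := Finset.card_le_card hint
        simp only [Finset.card_singleton] at h2
        omega

lemma card_add_card_compl [Fintype V] [DecidableEq V] (G : SimpleGraph V)
    [DecidableRel G.Adj] [DecidableRel Gᶜ.Adj] :
    G.edgeFinset.card + Gᶜ.edgeFinset.card = (Fintype.card V).choose 2 := by
  classical
  rw [← card_edgeFinset_top_eq_card_choose_two]
  rw [← Finset.card_union_of_disjoint (disjoint_edgeFinset.mpr disjoint_compl_right)]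
  congr 1
  ext e
  induction e with
  | _ a b =>
    simp only [Finset.mem_union, mem_edgeFinset, mem_edgeSet, top_adj, compl_adj]
    constructor
    · rintro (h | h)
      exacts [h.ne, h.1]
    · intro h
      by_cases hG : G.Adj a b
      exacts [Or.inl hG, Or.inr ⟨h, hG⟩]

lemma top_hamcyc [Fintype V] {n : ℕ} (hcard : Fintype.card V = n) (hn : 3 ≤ n) [NeZero n] :
    ∃ g : Fin n ≃ V, ∀ i : Fin n, (⊤ : SimpleGraph V).Adj (g i) (g (i + 1)) := by
  refine ⟨(Fintype.equivFinOfCardEq hcard).symm, fun i => ?_⟩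
  rw [top_adj]
  intro hc
  have h1 : i = i + 1 := (Fintype.equivFinOfCardEq hcard).symm.injective hc
  have h2 : (1 : Fin n) = 0 := by
    have := (left_eq_add).mp h1
    exact this
  have h3 := congrArg Fin.val h2
  rw [Fin.val_one'] at h3
  rw [Nat.mod_eq_of_lt (by omega)] at h3
  simp at h3

lemma degree_ncard [Fintype V] (G : SimpleGraph V) (w : V) [Fintype (G.neighborSet w)] :
    G.degree w = (G.neighborSet w).ncard := by
  rw [← card_neighborFinset_eq_degree, neighborFinset_def, ← Set.ncard_eq_toFinset_card']

lemma edgeFinset_ncard [Fintype V] (G : SimpleGraph V) [Fintype G.edgeSet] :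
    G.edgeFinset.card = G.edgeSet.ncard := by
  rw [edgeFinset, ← Set.ncard_eq_toFinset_card']

lemma ore_ham [Fintype V] [DecidableEq V] {n : ℕ} (hcard : Fintype.card V = n)
    (hn : 3 ≤ n) [NeZero n] :
    ∀ (k : ℕ) (G : SimpleGraph V),
      n.choose 2 ≤ G.edgeSet.ncard + k →
      (∀ u v : V, u ≠ v → ¬G.Adj u v →
        n ≤ (G.neighborSet u).ncard + (G.neighborSet v).ncard) →
      ∃ g : Fin n ≃ V, ∀ i : Fin n, G.Adj (g i) (g (i + 1)) := by
  intro k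
  induction k with
  | zero =>
    intro G hle _
    classical
    rw [← edgeFinset_ncard G] at hle
    have htop : G = ⊤ := by
      rw [← edgeFinset_inj]
      apply Finset.eq_of_subset_of_card_le (edgeFinset_mono le_top)
      rw [card_edgeFinset_top_eq_card_choose_two, hcard]
      omega
    rw [htop]
    exact top_hamcyc hcard hn
  | succ k ih =>
    intro G hle hOre
    by_cases hcomp : ∀ u v : V, u ≠ v → G.Adj u v
    · have htop : G = ⊤ := by
        ext u v
        rw [top_adj]
        exact ⟨fun h => h.ne, hcomp u v⟩
      rw [htop]
      exact top_hamcyc hcard hn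
    · push_neg at hcomp
      obtain ⟨u, v, huv, hnadj⟩ := hcomp
      classical
      have hcup : (G ⊔ edge u v).edgeSet.ncard = G.edgeSet.ncard + 1 := by
        have h0 := G.card_edgeFinset_sup_edge hnadj huv
        rw [edgeFinset_ncard, edgeFinset_ncard] at h0
        exact h0
      have hdegmono : ∀ (w : V),
          (G.neighborSet w).ncard ≤ ((G ⊔ edge u v).neighborSet w).ncard := by
        intro w
        apply Set.ncard_le_ncard _ (Set.toFinite _)
        intro x hx
        exact Or.inl hx
      have hOre' : ∀ x y : V, x ≠ y → ¬(G ⊔ edge u v).Adj x y →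
          n ≤ ((G ⊔ edge u v).neighborSet x).ncard + ((G ⊔ edge u v).neighborSet y).ncard := by
        intro x y hxy hnadj'
        have h1 : ¬G.Adj x y := fun hc => hnadj' (Or.inl hc)
        have h2 := hOre x y hxy h1
        have h3 := hdegmono x
        have h4 := hdegmono y
        omega
      obtain ⟨f, hf⟩ := ih (G ⊔ edge u v) (by omega) hOre'
      have hdeg : n ≤ G.degree u + G.degree v := by
        rw [degree_ncard, degree_ncard]
        exact hOre u v huv hnadj
      exact rotation G hn huv hnadj hdeg f hf

end OreAux

open OreAux

/-- Ore's theorem: a graph on `n` vertices with no Hamilton cycle has at most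
`(n-1 choose 2) + 1` edges. -/
theorem ore_edge_bound {V : Type*} [Fintype V] (G : SimpleGraph V)
    (h : ¬ ∃ (v : V) (c : G.Walk v v), c.IsHamiltonianCycle) :
    G.edgeFinset.card ≤ (Fintype.card V - 1).choose 2 + 1 := by
  classical
  by_contra hcon
  push_neg at hcon
  set n := Fintype.card V with hn
  have hle := G.card_edgeFinset_le_card_choose_two
  rw [← hn] at hle
  have hn3 : 3 ≤ n := by
    by_contra hc
    push_neg at hc
    have : n.choose 2 ≤ 1 := by
      interval_cases n <;> simp [Nat.choose]
    omega
  haveI : NeZero n := ⟨by omega⟩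
  have hchoose : n.choose 2 = (n - 1) + (n - 1).choose 2 := by
    have h1 : n = (n - 1) + 1 := by omega
    conv_lhs => rw [h1]
    rw [Nat.choose_succ_succ, Nat.choose_one_right]
  have hOre : ∀ u v : V, u ≠ v → ¬G.Adj u v → n ≤ G.degree u + G.degree v := by
    intro u v huv hnadj
    have hcadj : Gᶜ.Adj u v := ⟨huv, hnadj⟩
    have h1 := deg_sum_le Gᶜ hcadj
    have h2 := card_add_card_compl G
    rw [← hn] at h2
    have h3 : Gᶜ.degree u = n - 1 - G.degree u := by
      rw [degree_compl, hn]
    have h4 : Gᶜ.degree v = n - 1 - G.degree v := by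
      rw [degree_compl, hn]
    have h5 : G.degree u < n := G.degree_lt_card_verts u
    have h6 : G.degree v < n := G.degree_lt_card_verts v
    omega
  have hOre' : ∀ u v : V, u ≠ v → ¬G.Adj u v →
      n ≤ (G.neighborSet u).ncard + (G.neighborSet v).ncard := by
    intro u v huv hnadj
    rw [← degree_ncard, ← degree_ncard]
    exact hOre u v huv hnadj
  obtain ⟨g, hg⟩ := ore_ham rfl hn3 (n.choose 2) G (Nat.le_add_left _ _) hOre'
  exact h (hamcyc_to_cycle G rfl hn3 g hg)
end

section
/- Let $G$ be a graph on $n$ vertices with $m$ edges and minimum degree $\delta(G) \geq 1$. Then the spectral radius satisfies $\rho(G) \leq \sqrt{2m - n + 1}$. -/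
open SimpleGraph

attribute [local instance] Classical.propDecidable

noncomputable def specRad {V : Type*} [Fintype V] (G : SimpleGraph V) : ℝ :=
  sSup {μ : ℝ | Module.End.HasEigenvalue (Matrix.toLin' (G.adjMatrix ℝ)) μ}

open scoped Matrix

/-- Hong's inequality: if `δ(G) ≥ 1`, then `ρ(G) ≤ √(2m - n + 1)`. -/
theorem hong_inequality {V : Type*} [Fintype V] (G : SimpleGraph V)
    (hδ : 1 ≤ G.minDegree) :
    specRad G ≤ Real.sqrt (2 * (G.edgeFinset.card : ℝ) - (Fintype.card V : ℝ) + 1) := by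
  apply Real.sSup_le _ (Real.sqrt_nonneg _)
  rintro μ hμ
  obtain ⟨x, hv⟩ := hμ.exists_hasEigenvector
  have hx0 : x ≠ 0 := hv.2
  have hax : G.adjMatrix ℝ *ᵥ x = μ • x := by
    rw [← Matrix.toLin'_apply]; exact hv.apply_eq_smul
  obtain ⟨i0, hi0⟩ : ∃ i, x i ≠ 0 := by
    by_contra h
    push_neg at h
    exact hx0 (funext h)
  obtain ⟨i, -, hi⟩ := Finset.exists_max_image Finset.univ (fun j => |x j|)
    ⟨i0, Finset.mem_univ _⟩
  have hxi : 0 < |x i| := lt_of_lt_of_le (abs_pos.2 hi0) (hi i0 (Finset.mem_univ _))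
  -- key identity
  have h2 : ∑ k ∈ G.neighborFinset i, ∑ j ∈ G.neighborFinset k, x j = μ ^ 2 * x i := by
    calc ∑ k ∈ G.neighborFinset i, ∑ j ∈ G.neighborFinset k, x j
        = (G.adjMatrix ℝ *ᵥ (G.adjMatrix ℝ *ᵥ x)) i := by simp
      _ = (G.adjMatrix ℝ *ᵥ (μ • x)) i := by rw [hax]
      _ = (μ • (G.adjMatrix ℝ *ᵥ x)) i := by rw [Matrix.mulVec_smul]
      _ = μ ^ 2 * x i := by rw [hax]; simp [pow_two, mul_assoc]
  -- bound by the row sums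
  have hb : μ ^ 2 * |x i| ≤ (∑ k ∈ G.neighborFinset i, (G.degree k : ℝ)) * |x i| := by
    have h3 : |μ ^ 2 * x i| ≤ ∑ k ∈ G.neighborFinset i, ∑ j ∈ G.neighborFinset k, |x j| := by
      rw [← h2]
      refine (Finset.abs_sum_le_sum_abs _ _).trans ?_
      exact Finset.sum_le_sum fun k _ => Finset.abs_sum_le_sum_abs _ _
    have h4 : ∀ k ∈ G.neighborFinset i,
        ∑ j ∈ G.neighborFinset k, |x j| ≤ (G.degree k : ℝ) * |x i| := by
      intro k _
      calc ∑ j ∈ G.neighborFinset k, |x j| ≤ ∑ _j ∈ G.neighborFinset k, |x i| :=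
            Finset.sum_le_sum fun j _ => hi j (Finset.mem_univ _)
        _ = (G.degree k : ℝ) * |x i| := by
            rw [Finset.sum_const, nsmul_eq_mul, G.card_neighborFinset_eq_degree]
    calc μ ^ 2 * |x i| = |μ ^ 2 * x i| := by
          rw [abs_mul, abs_of_nonneg (sq_nonneg μ)]
      _ ≤ ∑ k ∈ G.neighborFinset i, ∑ j ∈ G.neighborFinset k, |x j| := h3
      _ ≤ ∑ k ∈ G.neighborFinset i, (G.degree k : ℝ) * |x i| := Finset.sum_le_sum h4
      _ = (∑ k ∈ G.neighborFinset i, (G.degree k : ℝ)) * |x i| := by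
          rw [Finset.sum_mul]
  have hμ2 : μ ^ 2 ≤ ∑ k ∈ G.neighborFinset i, (G.degree k : ℝ) :=
    le_of_mul_le_mul_right hb hxi
  -- combinatorial bound, in ℕ
  have hnat : ∑ k ∈ G.neighborFinset i, G.degree k + Fintype.card V
      ≤ 2 * G.edgeFinset.card + 1 := by
    have hsplit : ∑ k ∈ Finset.univ \ G.neighborFinset i, G.degree k
        + ∑ k ∈ G.neighborFinset i, G.degree k = ∑ v, G.degree v :=
      Finset.sum_sdiff (Finset.subset_univ _)
    have hisum : G.degree i + ∑ k ∈ (Finset.univ \ G.neighborFinset i).erase i, G.degree k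
        = ∑ k ∈ Finset.univ \ G.neighborFinset i, G.degree k := by
      have hmem : i ∈ Finset.univ \ G.neighborFinset i :=
        Finset.mem_sdiff.2 ⟨Finset.mem_univ _, G.notMem_neighborFinset_self i⟩
      exact Finset.add_sum_erase (Finset.univ \ G.neighborFinset i) (fun k => G.degree k) hmem
    have hlow : ((Finset.univ \ G.neighborFinset i).erase i).card
        ≤ ∑ k ∈ (Finset.univ \ G.neighborFinset i).erase i, G.degree k := by
      have h1 : ∑ _k ∈ (Finset.univ \ G.neighborFinset i).erase i, 1
          ≤ ∑ k ∈ (Finset.univ \ G.neighborFinset i).erase i, G.degree k :=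
        Finset.sum_le_sum fun k _ => le_trans hδ (G.minDegree_le_degree k)
      simpa using h1
    have hcard : ((Finset.univ \ G.neighborFinset i).erase i).card
        = Fintype.card V - G.degree i - 1 := by
      rw [Finset.card_erase_of_mem, Finset.card_sdiff_of_subset (Finset.subset_univ _),
        G.card_neighborFinset_eq_degree, Finset.card_univ]
      simp [G.notMem_neighborFinset_self i]
    have hlt : G.degree i < Fintype.card V := G.degree_lt_card_verts i
    have htot : ∑ v, G.degree v = 2 * G.edgeFinset.card :=
      G.sum_degrees_eq_twice_card_edges
    omega
  have hcomb : (∑ k ∈ G.neighborFinset i, (G.degree k : ℝ))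
      ≤ 2 * (G.edgeFinset.card : ℝ) - (Fintype.card V : ℝ) + 1 := by
    have := (Nat.cast_le (α := ℝ)).2 hnat
    push_cast at this
    linarith
  calc μ ≤ |μ| := le_abs_self μ
    _ = Real.sqrt (μ ^ 2) := (Real.sqrt_sq_eq_abs μ).symm
    _ ≤ _ := Real.sqrt_le_sqrt (hμ2.trans hcomb)
end

section
/- Let $G$ be a graph with $m$ edges. If $\rho(G) > \sqrt{m}$, then $G$ contains a triangle. -/
open SimpleGraph Finset Matrix

attribute [local instance] Classical.propDecidable

/-- Nosal's theorem: if `ρ(G) > √m`, then `G` contains a triangle. -/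
theorem nosal_triangle {V : Type*} [Fintype V] (G : SimpleGraph V)
    (h : Real.sqrt (G.edgeFinset.card : ℝ) < specRad G) :
    ∃ a b c : V, G.Adj a b ∧ G.Adj b c ∧ G.Adj a c := by
  by_contra hno
  push_neg at hno
  set m : ℝ := (G.edgeFinset.card : ℝ) with hm
  have hm0 : (0:ℝ) ≤ m := by positivity
  -- the eigenvalue set is nonempty
  have hSne : {μ : ℝ | Module.End.HasEigenvalue (Matrix.toLin' (G.adjMatrix ℝ)) μ}.Nonempty := by
    by_contra hne
    rw [Set.not_nonempty_iff_eq_empty] at hne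
    rw [specRad, hne, Real.sSup_empty] at h
    exact absurd h (not_lt.2 (Real.sqrt_nonneg _))
  obtain ⟨μ, hμS, hμ⟩ := exists_lt_of_lt_csSup hSne h
  obtain ⟨x, hx⟩ := hμS.exists_hasEigenvector
  have hxe : G.adjMatrix ℝ *ᵥ x = μ • x := by
    have := hx.apply_eq_smul
    rwa [Matrix.toLin'_apply] at this
  set A := G.adjMatrix ℝ with hA
  have hB : (A * A) *ᵥ x = (μ * μ) • x := by
    rw [← Matrix.mulVec_mulVec, hxe, Matrix.mulVec_smul, hxe, smul_smul]
  -- pick coordinate with max |x v|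
  obtain ⟨u0, hu0⟩ := Function.ne_iff.1 hx.2
  have : Nonempty V := ⟨u0⟩
  obtain ⟨v, -, hv⟩ := Finset.exists_max_image (univ : Finset V) (fun u => |x u|) ⟨u0, mem_univ u0⟩
  have hxv : 0 < |x v| := lt_of_lt_of_le (abs_pos.2 hu0) (hv u0 (mem_univ u0))
  have hBnn : ∀ u w : V, 0 ≤ (A * A) u w := by
    intro u w
    rw [Matrix.mul_apply]
    apply Finset.sum_nonneg
    intro i _
    rw [hA, SimpleGraph.adjMatrix_apply, SimpleGraph.adjMatrix_apply]
    split <;> split <;> norm_num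
  -- row sum bound: μ² ≤ ∑ u, (A*A) v u
  have hle : μ * μ ≤ ∑ u, (A * A) v u := by
    have h1 : (μ * μ) * |x v| ≤ (∑ u, (A * A) v u) * |x v| := by
      have hc : (μ * μ) * x v = ∑ u, (A * A) v u * x u := by
        have := congrFun hB v
        simp only [Matrix.mulVec, dotProduct, Pi.smul_apply, smul_eq_mul] at this
        rw [← this]
      calc (μ * μ) * |x v| = |(μ * μ) * x v| := by
            rw [abs_mul, abs_of_nonneg (mul_self_nonneg μ)]
        _ = |∑ u, (A * A) v u * x u| := by rw [hc]
        _ ≤ ∑ u, |(A * A) v u * x u| := Finset.abs_sum_le_sum_abs _ _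
        _ ≤ ∑ u, (A * A) v u * |x v| := by
            apply Finset.sum_le_sum
            intro u _
            rw [abs_mul, abs_of_nonneg (hBnn v u)]
            exact mul_le_mul_of_nonneg_left (hv u (mem_univ u)) (hBnn v u)
        _ = (∑ u, (A * A) v u) * |x v| := by rw [Finset.sum_mul]
    exact le_of_mul_le_mul_right h1 hxv
  -- triangle-free row sum bound: ∑ u, (A*A) v u ≤ m
  have hrow : ∑ u, (A * A) v u ≤ m := by
    have h1 : ∑ u, (A * A) v u
        = (((univ : Finset (V × V))).filter fun p => G.Adj v p.1 ∧ G.Adj p.1 p.2).card := by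
      calc ∑ u, (A * A) v u
          = ∑ p : V × V, (if G.Adj v p.1 ∧ G.Adj p.1 p.2 then (1:ℝ) else 0) := by
            simp only [Matrix.mul_apply, hA, SimpleGraph.adjMatrix_apply, ite_mul, one_mul,
              zero_mul, ← ite_and]
            rw [Finset.sum_comm, Fintype.sum_prod_type]
        _ = _ := by rw [Finset.sum_boole]
    have h2 : (((univ : Finset (V × V))).filter fun p => G.Adj v p.1 ∧ G.Adj p.1 p.2).card
        ≤ G.edgeFinset.card := by
      apply Finset.card_le_card_of_injOn (fun p => s(p.1, p.2))
      · intro p hp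
        simp only [Finset.mem_coe, Finset.mem_filter] at hp
        exact SimpleGraph.mem_edgeFinset.2 hp.2.2
      · intro p hp q hq hpq
        simp only [Finset.mem_coe, Finset.mem_filter] at hp hq
        simp only [Sym2.eq, Sym2.rel_iff', Prod.mk.injEq, Prod.swap_prod_mk] at hpq
        rcases hpq with ⟨ha, hb⟩ | ⟨ha, hb⟩
        · exact Prod.ext ha hb
        · exfalso
          rw [← hb] at hq
          exact hno v p.1 p.2 hp.2.1 hp.2.2 hq.2.1
    rw [h1, hm]
    exact_mod_cast h2
  have hmu2 : m < μ * μ := by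
    nlinarith [Real.sq_sqrt hm0, Real.sqrt_nonneg m]
  linarith
end

section
/- Let $G$ be any graph (possibly with isolated vertices). Then for every vertex $v$ of $G$, $\rho^2(G) \leq \rho^2(G - v) + 2 d_G(v)$. -/
open SimpleGraph

attribute [local instance] Classical.propDecidable

namespace SpecRadAux

open Matrix Finset

variable {W : Type*} [Fintype W] (H : SimpleGraph W)

lemma isHermitian_adj' : (H.adjMatrix ℝ).IsHermitian := by
  ext i j
  simp only [conjTranspose_apply, SimpleGraph.adjMatrix_apply, star_trivial]
  rw [SimpleGraph.adj_comm]

lemma mem_spec_iff {μ : ℝ} :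
    Module.End.HasEigenvalue (Matrix.toLin' (H.adjMatrix ℝ)) μ ↔ μ ∈ spectrum ℝ (H.adjMatrix ℝ) := by
  rw [Module.End.hasEigenvalue_iff_mem_spectrum]
  exact Iff.of_eq (congrArg (μ ∈ ·) (AlgEquiv.spectrum_eq Matrix.toLinAlgEquiv' (H.adjMatrix ℝ)))

lemma mem_spec_iff' {μ : ℝ} :
    Module.End.HasEigenvalue (Matrix.toLin' (H.adjMatrix ℝ)) μ ↔
      Module.End.HasEigenvalue (Matrix.toEuclideanLin (H.adjMatrix ℝ)) μ := by
  rw [mem_spec_iff, Module.End.hasEigenvalue_iff_mem_spectrum,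
    Matrix.spectrum_toEuclideanLin]

lemma finite_spec : {μ : ℝ | Module.End.HasEigenvalue (Matrix.toLin' (H.adjMatrix ℝ)) μ}.Finite :=
  Module.End.finite_hasEigenvalue _

lemma le_specRad' {μ : ℝ} (h : Module.End.HasEigenvalue (Matrix.toLin' (H.adjMatrix ℝ)) μ) :
    μ ≤ specRad H :=
  le_csSup (finite_spec H).bddAbove h

lemma specRad_mem [Nonempty W] :
    Module.End.HasEigenvalue (Matrix.toLin' (H.adjMatrix ℝ)) (specRad H) := by
  have hsymm : (Matrix.toEuclideanLin (H.adjMatrix ℝ)).IsSymmetric :=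
    (Matrix.isHermitian_iff_isSymmetric).1 (isHermitian_adj' H)
  have hev := hsymm.hasEigenvalue_iSup_of_finiteDimensional
  have hmem : (⨆ x : { x : EuclideanSpace ℝ W // x ≠ 0 },
      RCLike.re (inner ℝ ((Matrix.toEuclideanLin (H.adjMatrix ℝ)) x) (x : EuclideanSpace ℝ W) : ℝ)
        / ‖(x : EuclideanSpace ℝ W)‖ ^ 2) ∈
      {μ : ℝ | Module.End.HasEigenvalue (Matrix.toLin' (H.adjMatrix ℝ)) μ} :=
    (mem_spec_iff' H).2 hev
  exact Set.Nonempty.csSup_mem ⟨_, hmem⟩ (finite_spec H)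

lemma quadform_le (z : W → ℝ) :
    ∑ i, (∑ j, (H.adjMatrix ℝ) i j * z j) * z i ≤ specRad H * ∑ i, z i ^ 2 := by
  rcases eq_or_ne z 0 with rfl | hz
  · simp
  · have hW : Nonempty W := by
      obtain ⟨w, -⟩ := Function.ne_iff.1 hz
      exact ⟨w⟩
    set T : EuclideanSpace ℝ W →ₗ[ℝ] EuclideanSpace ℝ W :=
      Matrix.toEuclideanLin (H.adjMatrix ℝ) with hT
    have hsymm : T.IsSymmetric := (Matrix.isHermitian_iff_isSymmetric).1 (isHermitian_adj' H)
    set z' : EuclideanSpace ℝ W := (WithLp.equiv 2 (W → ℝ)).symm z with hz'def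
    have hz' : z' ≠ 0 := by
      intro h
      apply hz
      funext i
      have := congrArg (fun y : EuclideanSpace ℝ W => y i) h
      simpa [hz'def] using this
    have hinner : (inner ℝ (T z') z' : ℝ) = ∑ i, (∑ j, (H.adjMatrix ℝ) i j * z j) * z i := by
      rw [hT, Matrix.toEuclideanLin_apply]
      rw [PiLp.inner_apply]
      refine Finset.sum_congr rfl fun i _ => ?_
      simp [hz'def, Matrix.mulVec, dotProduct, mul_comm]
    have hnorm : ‖z'‖ ^ 2 = ∑ i, z i ^ 2 := by
      rw [← real_inner_self_eq_norm_sq, PiLp.inner_apply]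
      refine Finset.sum_congr rfl fun i _ => ?_
      simp [hz'def, sq]
    set Tc := LinearMap.toContinuousLinearMap T with hTc
    have hbdd : BddAbove (Set.range fun x : { x : EuclideanSpace ℝ W // x ≠ 0 } =>
        RCLike.re (inner ℝ (T x) (x : EuclideanSpace ℝ W) : ℝ) / ‖(x : EuclideanSpace ℝ W)‖ ^ 2) := by
      refine ⟨‖Tc‖, Set.forall_mem_range.2 fun x => ?_⟩
      have hx : (0:ℝ) < ‖(x : EuclideanSpace ℝ W)‖ ^ 2 := by
        have := norm_pos_iff.2 x.2
        positivity
      rw [div_le_iff₀ hx]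
      calc RCLike.re (inner ℝ (T x) (x : EuclideanSpace ℝ W) : ℝ)
          ≤ ‖T x‖ * ‖(x : EuclideanSpace ℝ W)‖ := by
            simpa using real_inner_le_norm (T x) (x : EuclideanSpace ℝ W)
        _ ≤ (‖Tc‖ * ‖(x : EuclideanSpace ℝ W)‖) * ‖(x : EuclideanSpace ℝ W)‖ := by
            have : ‖T x‖ = ‖Tc x‖ := rfl
            rw [this]
            exact mul_le_mul_of_nonneg_right (Tc.le_opNorm _) (norm_nonneg _)
        _ = ‖Tc‖ * ‖(x : EuclideanSpace ℝ W)‖ ^ 2 := by ring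
    have hle : RCLike.re (inner ℝ (T z') z' : ℝ) / ‖z'‖ ^ 2 ≤ specRad H := by
      have h1 := le_ciSup hbdd (⟨z', hz'⟩ : { x : EuclideanSpace ℝ W // x ≠ 0 })
      refine h1.trans (le_specRad' H ?_)
      exact (mem_spec_iff' H).2 hsymm.hasEigenvalue_iSup_of_finiteDimensional
    have hpos : (0:ℝ) < ‖z'‖ ^ 2 := by
      have := norm_pos_iff.2 hz'
      positivity
    rw [div_le_iff₀ hpos] at hle
    rw [← hinner, ← hnorm]
    simpa [mul_comm] using hle

lemma specRad_nonneg : 0 ≤ specRad H := by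
  cases isEmpty_or_nonempty W with
  | inl h =>
    have : {μ : ℝ | Module.End.HasEigenvalue (Matrix.toLin' (H.adjMatrix ℝ)) μ} = ∅ := by
      ext μ
      simp only [Set.mem_setOf_eq, Set.mem_empty_iff_false, iff_false]
      intro hμ
      obtain ⟨x, hx⟩ := hμ.exists_hasEigenvector
      exact hx.2 (Subsingleton.elim _ _)
    rw [specRad, this, Real.sSup_empty]
  | inr h =>
    obtain ⟨w⟩ := h
    have h := quadform_le H (Pi.single w 1)
    have hL : ∑ i, (∑ j, (H.adjMatrix ℝ) i j * (Pi.single w 1 : W → ℝ) j)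
        * (Pi.single w 1 : W → ℝ) i = 0 := by
      rw [Finset.sum_eq_single w]
      · simp [Pi.single_apply, Finset.sum_ite_eq']
      · intro b _ hb
        simp [Pi.single_apply, hb]
      · simp
    have hR : ∑ i, ((Pi.single w 1 : W → ℝ) i) ^ 2 = 1 := by
      rw [Finset.sum_eq_single w]
      · simp
      · intro b _ hb
        simp [Pi.single_apply, hb]
      · simp
    rw [hL, hR, mul_one] at h
    exact h

lemma exists_unit_eigvec [Nonempty W] :
    ∃ x : W → ℝ, (∑ i, x i ^ 2 = 1) ∧ (H.adjMatrix ℝ) *ᵥ x = specRad H • x := by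
  obtain ⟨x0, hx0⟩ := (specRad_mem H).exists_hasEigenvector
  have hx0ne := hx0.2
  have heig : (H.adjMatrix ℝ) *ᵥ x0 = specRad H • x0 := by
    have := hx0.apply_eq_smul
    rwa [Matrix.toLin'_apply] at this
  set s : ℝ := ∑ i, x0 i ^ 2 with hs
  have hspos : 0 < s := by
    obtain ⟨w, hw⟩ := Function.ne_iff.1 hx0ne
    refine Finset.sum_pos' (fun i _ => sq_nonneg _) ⟨w, Finset.mem_univ w, ?_⟩
    have : x0 w ≠ 0 := by simpa using hw
    positivity
  refine ⟨(Real.sqrt s)⁻¹ • x0, ?_, ?_⟩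
  · have : ∑ i, ((Real.sqrt s)⁻¹ • x0) i ^ 2 = ((Real.sqrt s)⁻¹)^2 * s := by
      rw [hs, Finset.mul_sum]
      exact Finset.sum_congr rfl fun i _ => by simp [mul_pow]
    rw [this, inv_pow, Real.sq_sqrt hspos.le]
    exact inv_mul_cancel₀ hspos.ne'
  · rw [Matrix.mulVec_smul, heig, smul_comm]

end SpecRadAux

open SpecRadAux Matrix Finset in
/-- For any graph `G` and any vertex `v`, `ρ²(G) ≤ ρ²(G - v) + 2 d(v)`. -/
theorem specRad_sq_delete_vertex {V : Type*} [Fintype V] (G : SimpleGraph V) (v : V) :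
    specRad G ^ 2 ≤ specRad (G.induce {w | w ≠ v}) ^ 2 + 2 * (G.degree v : ℝ) := by
  have hV : Nonempty V := ⟨v⟩
  obtain ⟨x, hxnorm, heig⟩ := exists_unit_eigvec G
  set A := G.adjMatrix ℝ with hA
  set μ := specRad G with hμ
  set ρ := specRad (G.induce {w | w ≠ v}) with hρ
  set d : ℝ := (G.degree v : ℝ) with hd
  set t : ℝ := x v ^ 2 with ht
  have hμ0 : 0 ≤ μ := specRad_nonneg G
  have hρ0 : 0 ≤ ρ := specRad_nonneg _
  have hd0 : 0 ≤ d := Nat.cast_nonneg _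
  have ht0 : 0 ≤ t := sq_nonneg _
  -- eigen equation pointwise
  have heig' : ∀ i, ∑ j, A i j * x j = μ * x i := by
    intro i
    have := congrFun heig i
    simpa [Matrix.mulVec, dotProduct] using this
  -- neighbor sum
  have hnbr : ∀ i, ∑ j, A i j * x j = ∑ u ∈ G.neighborFinset v, x u → True := fun _ _ => trivial
  have hNsum : ∑ u ∈ G.neighborFinset v, x u = μ * x v := by
    rw [← heig' v]
    rw [SimpleGraph.neighborFinset_eq_filter, Finset.sum_filter]
    refine Finset.sum_congr rfl fun j _ => ?_
    by_cases h : G.Adj v j <;> simp [hA, h]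
  -- sum of squares over erase v
  have hsplit : t + ∑ i ∈ Finset.univ.erase v, x i ^ 2 = 1 := by
    rw [ht, ← hxnorm]
    exact Finset.add_sum_erase Finset.univ (fun i => x i ^ 2) (Finset.mem_univ v)
  have herase_nonneg : 0 ≤ ∑ i ∈ Finset.univ.erase v, x i ^ 2 :=
    Finset.sum_nonneg fun i _ => sq_nonneg _
  -- Cauchy-Schwarz
  have h3 : (μ * x v) ^ 2 ≤ d * (1 - t) := by
    rw [← hNsum]
    have hcs : (∑ u ∈ G.neighborFinset v, x u) ^ 2 ≤
        (∑ u ∈ G.neighborFinset v, (1:ℝ) ^ 2) * ∑ u ∈ G.neighborFinset v, x u ^ 2 := by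
      have := Finset.sum_mul_sq_le_sq_mul_sq (G.neighborFinset v) (fun _ => (1:ℝ)) x
      simpa using this
    have hcard : (∑ u ∈ G.neighborFinset v, (1:ℝ) ^ 2) = d := by
      rw [hd]
      simp only [one_pow, Finset.sum_const, nsmul_eq_mul, mul_one, SimpleGraph.degree]
    have hsub : G.neighborFinset v ⊆ Finset.univ.erase v := by
      intro u hu
      rw [SimpleGraph.mem_neighborFinset] at hu
      exact Finset.mem_erase.2 ⟨hu.ne', Finset.mem_univ u⟩
    have hle : ∑ u ∈ G.neighborFinset v, x u ^ 2 ≤ ∑ i ∈ Finset.univ.erase v, x i ^ 2 :=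
      Finset.sum_le_sum_of_subset_of_nonneg hsub fun i _ _ => sq_nonneg _
    have h1t : ∑ i ∈ Finset.univ.erase v, x i ^ 2 = 1 - t := by linarith
    calc (∑ u ∈ G.neighborFinset v, x u) ^ 2
        ≤ (∑ u ∈ G.neighborFinset v, (1:ℝ) ^ 2) * ∑ u ∈ G.neighborFinset v, x u ^ 2 := hcs
      _ ≤ d * (1 - t) := by
          rw [hcard]
          apply mul_le_mul_of_nonneg_left _ hd0
          rw [← h1t] at *
          exact hle
  -- quadratic form of G equals μ
  have h4 : ∑ i, ∑ j, A i j * x j * x i = μ := by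
    have : ∀ i, ∑ j, A i j * x j * x i = (μ * x i) * x i := by
      intro i
      rw [← Finset.sum_mul, heig' i]
    rw [Finset.sum_congr rfl fun i _ => this i]
    have : ∑ i, μ * x i * x i = μ * ∑ i, x i ^ 2 := by
      rw [Finset.mul_sum]
      exact Finset.sum_congr rfl fun i _ => by ring
    rw [this, hxnorm, mul_one]
  -- the induced graph quadratic form
  set B := (G.induce {w | w ≠ v}).adjMatrix ℝ with hB
  set z : ↥{w : V | w ≠ v} → ℝ := fun a => x ↑a with hz
  have hBapply : ∀ a b : ↥{w : V | w ≠ v}, B a b = A ↑a ↑b := by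
    intro a b
    simp [hB, hA, SimpleGraph.comap_adj]
  have hsubty : ∀ f : V → ℝ, ∑ a : ↥{w : V | w ≠ v}, f ↑a = ∑ i ∈ Finset.univ.erase v, f i := by
    intro f
    exact (Finset.sum_subtype (Finset.univ.erase v) (fun x => by simp [Finset.mem_erase]) f).symm
  -- QB' : double sum over erase v
  have hQB : ∑ a, (∑ b, B a b * z b) * z a =
      ∑ i ∈ Finset.univ.erase v, ∑ j ∈ Finset.univ.erase v, A i j * x j * x i := by
    rw [← hsubty (fun i => ∑ j ∈ Finset.univ.erase v, A i j * x j * x i)]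
    refine Finset.sum_congr rfl fun a _ => ?_
    rw [Finset.sum_mul, ← hsubty (fun j => A ↑a j * x j * x ↑a)]
    refine Finset.sum_congr rfl fun b _ => by rw [hBapply]
  -- row sums
  have hrowfull : ∀ i, ∑ j, A v j * x j * x i = μ * x v * x i := by
    intro i
    rw [← Finset.sum_mul, heig' v]
  have hAvv : A v v = 0 := by simp [hA]
  have hsym : ∀ i, A i v = A v i := by
    intro i
    simp only [hA, SimpleGraph.adjMatrix_apply]
    rw [SimpleGraph.adj_comm]
  have hcolv : ∑ i ∈ Finset.univ.erase v, A i v * x v * x i = μ * t := by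
    rw [Finset.sum_erase _ (by rw [hAvv]; ring)]
    have : ∀ i, A i v * x v * x i = A v i * x i * x v := fun i => by rw [hsym i]; ring
    rw [Finset.sum_congr rfl fun i _ => this i, ← Finset.sum_mul, heig' v, ht]
    ring
  have hrowv : ∑ j ∈ Finset.univ.erase v, A v j * x j * x v = μ * t := by
    rw [Finset.sum_erase _ (by rw [hAvv]; ring), hrowfull v, ht]
    ring
  -- decompose the full quadratic form
  have h5 : ∑ i ∈ Finset.univ.erase v, ∑ j ∈ Finset.univ.erase v, A i j * x j * x i
      = μ - 2 * (μ * t) := by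
    have hfull : ∑ i, ∑ j, A i j * x j * x i
        = (∑ j, A v j * x j * x v) + ∑ i ∈ Finset.univ.erase v, ∑ j, A i j * x j * x i :=
      (Finset.add_sum_erase Finset.univ (fun i => ∑ j, A i j * x j * x i)
        (Finset.mem_univ v)).symm
    have hinner : ∀ i, ∑ j, A i j * x j * x i
        = A i v * x v * x i + ∑ j ∈ Finset.univ.erase v, A i j * x j * x i := fun i =>
      (Finset.add_sum_erase Finset.univ (fun j => A i j * x j * x i) (Finset.mem_univ v)).symm
    have hsplit2 : ∑ i ∈ Finset.univ.erase v, ∑ j, A i j * x j * x i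
        = (∑ i ∈ Finset.univ.erase v, A i v * x v * x i)
          + ∑ i ∈ Finset.univ.erase v, ∑ j ∈ Finset.univ.erase v, A i j * x j * x i := by
      rw [Finset.sum_congr rfl fun i _ => hinner i, Finset.sum_add_distrib]
    have hv : (∑ j, A v j * x j * x v) = μ * t := by
      rw [hrowfull v, ht]; ring
    rw [hfull, hsplit2, hv, hcolv] at h4
    linarith
  -- Rayleigh bound for the induced graph
  have hzsq : ∑ a, z a ^ 2 = 1 - t := by
    rw [hz]
    have : ∑ a : ↥{w : V | w ≠ v}, (x ↑a) ^ 2 = ∑ i ∈ Finset.univ.erase v, x i ^ 2 :=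
      hsubty (fun i => x i ^ 2)
    rw [this]
    linarith
  have hray : μ - 2 * (μ * t) ≤ ρ * (1 - t) := by
    have := quadform_le (G.induce {w | w ≠ v}) z
    have h' : ∑ a, (∑ b, B a b * z b) * z a ≤ ρ * ∑ a, z a ^ 2 := by convert this
    rw [hQB, h5, hzsq] at h'
    exact h'
  -- final algebra
  have h3' : μ ^ 2 * t ≤ d * (1 - t) := by
    have : (μ * x v) ^ 2 = μ ^ 2 * t := by rw [ht]; ring
    linarith [h3, this.symm.le, this.le]
  have ht1 : t ≤ 1 := by linarith
  rcases le_or_gt (1/2 : ℝ) t with hhalf | hhalf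
  · have hμ2 : μ ^ 2 ≤ d := by nlinarith
    nlinarith [sq_nonneg ρ]
  · have hL0 : 0 ≤ μ * (1 - 2 * t) := by
      apply mul_nonneg hμ0
      linarith
    have hray' : μ * (1 - 2 * t) ≤ ρ * (1 - t) := by linarith [hray]
    have hsq : (μ * (1 - 2 * t)) ^ 2 ≤ (ρ * (1 - t)) ^ 2 := by
      apply pow_le_pow_left₀ hL0 hray'
    have e1 : 0 ≤ (ρ * (1 - t)) ^ 2 - (μ * (1 - 2 * t)) ^ 2 := by linarith
    have e2 : 0 ≤ (2 - 3 * t) * (d * (1 - t) - μ ^ 2 * t) :=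
      mul_nonneg (by linarith) (by linarith)
    have e3 : 0 ≤ d * t * (1 - t) :=
      mul_nonneg (mul_nonneg hd0 ht0) (by linarith)
    have hid : (ρ ^ 2 + 2 * d - μ ^ 2) * (1 - t) ^ 2
        = ((ρ * (1 - t)) ^ 2 - (μ * (1 - 2 * t)) ^ 2)
          + (2 - 3 * t) * (d * (1 - t) - μ ^ 2 * t) + d * t * (1 - t) := by ring
    have hkey : 0 ≤ (ρ ^ 2 + 2 * d - μ ^ 2) * (1 - t) ^ 2 := by
      rw [hid]; linarith
    have hpos : (0:ℝ) < (1 - t) ^ 2 := by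
      have h1t : (0:ℝ) < 1 - t := by linarith
      positivity
    have hfin : 0 ≤ ρ ^ 2 + 2 * d - μ ^ 2 := by
      by_contra hcon
      push_neg at hcon
      have : (ρ ^ 2 + 2 * d - μ ^ 2) * (1 - t) ^ 2 < 0 := mul_neg_of_neg_of_pos hcon hpos
      linarith
    linarith
end
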